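/- The assignment M^C_S of Theorem (universal bivariant theory), with product [V →h X] • [W →k Y] := [V' →^{h∘k''} X], pushforward f_*[V →h X] := [V →^{f∘h} Y], and pullback g^*[V →h X] := [V' →^{h'} X'] via fiber product, satisfies the associativity axiom (B-1): (α • β) • γ = α • (β • γ). -/

import Mathlib

open CategoryTheory CategoryTheory.Limits

universe v u

/-- The underlying object of the bivariant product of generators
`[A →a X] • [B →b Y]` in the universal bivariant theory, for `f : X ⟶ Y`. -/
noncomputable def prodObj {V : Type u} [Category.{v} V] [HasPullbacks V]
    {X Y A B : V} (f : X ⟶ Y) (a : A ⟶ X) (b : B ⟶ Y) : V :=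
  pullback a (pullback.fst f b)

/-- The structure morphism to `X` of the bivariant product of generators. -/
noncomputable def prodMor {V : Type u} [Category.{v} V] [HasPullbacks V]
    {X Y A B : V} (f : X ⟶ Y) (a : A ⟶ X) (b : B ⟶ Y) : prodObj f a b ⟶ X :=
  pullback.fst a (pullback.fst f b) ≫ a

/-- Associativity (axiom (B-1)) of the bivariant product of the universal
bivariant theory `M^C_S`, on generators: the two iterated product generators are isomorphic
over `X`. -/
theorem universal_product_assoc {V : Type u} [Category.{v} V] [HasPullbacks V]
    (C S : MorphismProperty V) [S.IsStableUnderBaseChange] [S.IsStableUnderComposition]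
    [C.IsStableUnderBaseChange] [C.IsStableUnderComposition]
    {X Y Z T A B D : V} (f : X ⟶ Y) (g : Y ⟶ Z) (e : Z ⟶ T)
    (a : A ⟶ X) (b : B ⟶ Y) (c : D ⟶ Z)
    (haC : C a) (hbC : C b) (hcC : C c)
    (haS : S (a ≫ f)) (hbS : S (b ≫ g)) (hcS : S (c ≫ e)) :
    ∃ φ : prodObj (f ≫ g) (prodMor f a b) c ≅ prodObj f a (prodMor g b c),
      φ.hom ≫ prodMor f a (prodMor g b c) = prodMor (f ≫ g) (prodMor f a b) c := by
  -- Notation for the various pullback projections.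
  -- P := pullback f b
  set p₁ := pullback.fst f b with hp₁
  set p₂ := pullback.snd f b with hp₂
  -- Q := prodObj f a b = pullback a p₁
  set q₁ := pullback.fst a p₁ with hq₁
  set q₂ := pullback.snd a p₁ with hq₂
  -- L := prodObj (f ≫ g) (prodMor f a b) c = pullback (q₁ ≫ a) (pullback.fst (f≫g) c)
  set r₁ := pullback.fst (f ≫ g) c with hr₁
  set r₂ := pullback.snd (f ≫ g) c with hr₂
  -- S' := pullback g c
  set s₁ := pullback.fst g c with hs₁
  set s₂ := pullback.snd g c with hs₂
  -- T' := prodObj g b c = pullback b s₁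
  set t₁ := pullback.fst b s₁ with ht₁
  set t₂ := pullback.snd b s₁ with ht₂
  -- N := pullback f (t₁ ≫ b)
  have hPcond : p₁ ≫ f = p₂ ≫ b := pullback.condition
  have hQcond : q₁ ≫ a = q₂ ≫ p₁ := pullback.condition
  have hScond : s₁ ≫ g = s₂ ≫ c := pullback.condition
  have hTcond : t₁ ≫ b = t₂ ≫ s₁ := pullback.condition
  show ∃ φ : pullback (q₁ ≫ a) r₁ ≅ pullback a (pullback.fst f (t₁ ≫ b)),
      φ.hom ≫ pullback.fst a (pullback.fst f (t₁ ≫ b)) ≫ a =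
        pullback.fst (q₁ ≫ a) r₁ ≫ q₁ ≫ a
  set n₁ := pullback.fst f (t₁ ≫ b) with hn₁
  set n₂ := pullback.snd f (t₁ ≫ b) with hn₂
  have hNcond : n₁ ≫ f = n₂ ≫ (t₁ ≫ b) := pullback.condition
  set l₁ := pullback.fst (q₁ ≫ a) r₁ with hl₁
  set l₂ := pullback.snd (q₁ ≫ a) r₁ with hl₂
  have hLcond : l₁ ≫ (q₁ ≫ a) = l₂ ≫ r₁ := pullback.condition
  have hRcond : r₁ ≫ (f ≫ g) = r₂ ≫ c := pullback.condition
  set m₁ := pullback.fst a n₁ with hm₁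
  set m₂ := pullback.snd a n₁ with hm₂
  have hMcond : m₁ ≫ a = m₂ ≫ n₁ := pullback.condition
  -- the forward map
  have hSlift : (l₂ ≫ r₁ ≫ f) ≫ g = (l₂ ≫ r₂) ≫ c := by
    simp only [Category.assoc]
    rw [← hRcond]
  set σ : pullback (q₁ ≫ a) r₁ ⟶ pullback g c := pullback.lift (l₂ ≫ r₁ ≫ f) (l₂ ≫ r₂) hSlift
    with hσ
  have hQP : l₁ ≫ q₂ ≫ p₁ = l₂ ≫ r₁ := by
    rw [← hQcond]; simpa [Category.assoc] using hLcond
  have key : l₁ ≫ q₂ ≫ p₂ ≫ b = l₂ ≫ r₁ ≫ f := by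
    rw [← hPcond]
    calc l₁ ≫ q₂ ≫ p₁ ≫ f = (l₁ ≫ q₂ ≫ p₁) ≫ f := by simp [Category.assoc]
      _ = (l₂ ≫ r₁) ≫ f := by rw [hQP]
      _ = l₂ ≫ r₁ ≫ f := by simp [Category.assoc]
  have hTlift : (l₁ ≫ q₂ ≫ p₂) ≫ b = σ ≫ s₁ := by
    rw [hσ]; simp only [hs₁, pullback.lift_fst]
    simpa [Category.assoc] using key
  set τ : pullback (q₁ ≫ a) r₁ ⟶ pullback b s₁ := pullback.lift (l₁ ≫ q₂ ≫ p₂) σ hTlift with hτ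
  have hNlift : (l₂ ≫ r₁) ≫ f = τ ≫ (t₁ ≫ b) := by
    rw [hτ]
    have : (pullback.lift (l₁ ≫ q₂ ≫ p₂) σ hTlift) ≫ t₁ = l₁ ≫ q₂ ≫ p₂ := by
      exact pullback.lift_fst _ _ _
    rw [← Category.assoc, this]
    simpa [Category.assoc] using key.symm
  set ν : pullback (q₁ ≫ a) r₁ ⟶ pullback f (t₁ ≫ b) := pullback.lift (l₂ ≫ r₁) τ hNlift with hν
  have hhomlift : (l₁ ≫ q₁) ≫ a = ν ≫ n₁ := by
    rw [hν]; simp only [hn₁, pullback.lift_fst]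
    rw [Category.assoc]; exact hLcond
  set hom : pullback (q₁ ≫ a) r₁ ⟶ pullback a n₁ := pullback.lift (l₁ ≫ q₁) ν hhomlift with hhom
  -- the inverse map
  have hPlift : (m₂ ≫ n₁) ≫ f = (m₂ ≫ n₂ ≫ t₁) ≫ b := by
    simp only [Category.assoc]; rw [hNcond]
  set π : pullback a n₁ ⟶ pullback f b := pullback.lift (m₂ ≫ n₁) (m₂ ≫ n₂ ≫ t₁) hPlift with hπ
  have hQlift : m₁ ≫ a = π ≫ p₁ := by
    rw [hπ]; simp only [hp₁, pullback.lift_fst]; exact hMcond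
  set κ : pullback a n₁ ⟶ pullback a p₁ := pullback.lift m₁ π hQlift with hκ
  have hRlift : (m₂ ≫ n₁) ≫ (f ≫ g) = (m₂ ≫ n₂ ≫ t₂ ≫ s₂) ≫ c := by
    calc (m₂ ≫ n₁) ≫ (f ≫ g) = m₂ ≫ (n₁ ≫ f) ≫ g := by simp only [Category.assoc]
      _ = m₂ ≫ (n₂ ≫ (t₁ ≫ b)) ≫ g := by rw [hNcond]
      _ = m₂ ≫ n₂ ≫ ((t₁ ≫ b) ≫ g) := by simp only [Category.assoc]
      _ = m₂ ≫ n₂ ≫ ((t₂ ≫ s₁) ≫ g) := congrArg (fun x => m₂ ≫ n₂ ≫ x)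
            (by rw [hTcond])
      _ = m₂ ≫ n₂ ≫ t₂ ≫ (s₁ ≫ g) := by simp only [Category.assoc]
      _ = m₂ ≫ n₂ ≫ t₂ ≫ (s₂ ≫ c) := by rw [hScond]
      _ = (m₂ ≫ n₂ ≫ t₂ ≫ s₂) ≫ c := by simp only [Category.assoc]
  set ρ : pullback a n₁ ⟶ pullback (f ≫ g) c :=
    pullback.lift (m₂ ≫ n₁) (m₂ ≫ n₂ ≫ t₂ ≫ s₂) hRlift with hρ
  have hinvlift : κ ≫ (q₁ ≫ a) = ρ ≫ r₁ := by
    rw [hκ, hρ, ← Category.assoc]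
    simp only [hq₁, hr₁, pullback.lift_fst]
    exact hMcond
  set inv : pullback a n₁ ⟶ pullback (q₁ ≫ a) r₁ := pullback.lift κ ρ hinvlift with hinv
  refine ⟨⟨hom, inv, ?_, ?_⟩, ?_⟩
  · repeat' apply pullback.hom_ext
    all_goals
      simp only [hhom, hinv, hκ, hπ, hρ, hν, hτ, hσ, hq₁, hq₂, hp₁, hp₂, hr₁, hr₂, hs₁, hs₂,
        ht₁, ht₂, hn₁, hn₂, hm₁, hm₂, hl₁, hl₂, Category.assoc, Category.id_comp,
        Category.comp_id, pullback.lift_fst, pullback.lift_snd, pullback.lift_fst_assoc,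
        pullback.lift_snd_assoc]
    exact hQP.symm
  · repeat' apply pullback.hom_ext
    all_goals
      simp +zetaDelta only [hhom, hinv, hκ, hπ, hρ, hν, hτ, hσ, hq₁, hq₂, hp₁, hp₂, hr₁, hr₂, hs₁, hs₂,
        ht₁, ht₂, hn₁, hn₂, hm₁, hm₂, hl₁, hl₂, Category.assoc, Category.id_comp,
        Category.comp_id, pullback.lift_fst, pullback.lift_snd, pullback.lift_fst_assoc,
        pullback.lift_snd_assoc]
    calc m₂ ≫ n₁ ≫ f = m₂ ≫ (n₂ ≫ (t₁ ≫ b)) := by rw [hNcond]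
      _ = m₂ ≫ n₂ ≫ (t₂ ≫ s₁) := congrArg (fun x => m₂ ≫ n₂ ≫ x) (by rw [hTcond])
  · simp only [hhom, hm₁, Category.assoc]
    rw [← Category.assoc, pullback.lift_fst]
    simp only [Category.assoc]
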